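/- Let M be a matroid on ground set E = {1,…,N} with basis set ℬ, and let w ∈ ℝ^N. Define ℬ_w ⊆ ℬ to be the set of bases B minimizing w(B) = Σ_{i∈B} w_i. Then ℬ_w is the set of bases of a matroid on E; i.e., ℬ_w is nonempty and satisfies the basis exchange axiom. -/

import Mathlib

open Set

/-- For a finite matroid `M` on `{1,…,N}` and `w ∈ ℝ^N`, the set of `w`-minimal
bases is the basis set of a matroid: it is nonempty and satisfies the basis
exchange axiom. -/
theorem stmt10 (N : ℕ) (M : Matroid (Fin N)) [M.Finite] (w : Fin N → ℝ) :
    letI Bw : Set (Fin N) → Prop := fun B =>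
      M.IsBase B ∧ ∀ B', M.IsBase B' → (∑ᶠ i ∈ B, w i) ≤ ∑ᶠ i ∈ B', w i
    (∃ B, Bw B) ∧
    (∀ B₁ B₂ : Set (Fin N), Bw B₁ → Bw B₂ → ∀ e ∈ B₁ \ B₂,
      ∃ f ∈ B₂ \ B₁, Bw (insert f (B₁ \ {e}))) := by
  have wsplit : ∀ (B : Set (Fin N)) (x : Fin N), x ∈ B →
      (∑ᶠ i ∈ B, w i) = w x + ∑ᶠ i ∈ B \ {x}, w i := by
    intro B x hx
    conv_lhs => rw [show B = insert x (B \ {x}) by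
      rw [Set.insert_diff_singleton, Set.insert_eq_of_mem hx]]
    exact finsum_mem_insert _ (fun h => h.2 rfl) (Set.toFinite _)
  constructor
  · obtain ⟨B0, hB0⟩ := M.exists_isBase
    obtain ⟨B, hB, hmin⟩ := Set.exists_min_image {B | M.IsBase B}
      (fun B => ∑ᶠ i ∈ B, w i) (Set.toFinite _) ⟨B0, hB0⟩
    exact ⟨B, hB, fun B' hB' => hmin B' hB'⟩
  rintro B₁ B₂ ⟨hB₁, hw₁⟩ ⟨hB₂, hw₂⟩ e ⟨heB₁, heB₂⟩
  have heE : e ∈ M.E := hB₁.subset_ground heB₁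
  -- a minimal subset `J` of `B₂` whose closure contains `e`
  obtain ⟨J, hJ, hJmin⟩ := Set.exists_min_image {J | J ⊆ B₂ ∧ e ∈ M.closure J}
    Set.ncard (Set.toFinite _)
    ⟨B₂, ⟨rfl.subset, by rw [hB₂.closure_eq]; exact heE⟩⟩
  obtain ⟨hJB₂, heJ⟩ := hJ
  have hminJ : ∀ f ∈ J, e ∉ M.closure (J \ {f}) := by
    intro f hf hcon
    have h1 := hJmin (J \ {f}) ⟨diff_subset.trans hJB₂, hcon⟩
    have h2 : (J \ {f}).ncard < J.ncard :=
      Set.ncard_diff_singleton_lt_of_mem hf (Set.toFinite _)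
    omega
  -- find `f ∈ J` outside the closure of `B₁ \ {e}`
  have h2 : ∃ f ∈ J, f ∉ M.closure (B₁ \ {e}) := by
    by_contra h
    push_neg at h
    have hcl : M.closure J ⊆ M.closure (B₁ \ {e}) := by
      have := M.closure_subset_closure (X := J) (Y := M.closure (B₁ \ {e})) h
      rwa [M.closure_closure] at this
    exact hB₁.indep.notMem_closure_diff_of_mem heB₁ (hcl heJ)
  obtain ⟨f, hfJ, hfcl⟩ := h2
  have hfB₂ : f ∈ B₂ := hJB₂ hfJ
  have hfe : f ≠ e := fun h => heB₂ (h ▸ hfB₂)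
  have hfB₁ : f ∉ B₁ := by
    intro h
    exact hfcl (M.subset_closure _ (diff_subset.trans hB₁.subset_ground) ⟨h, hfe⟩)
  -- `insert f (B₁ \ {e})` is a base
  have hind1 : M.Indep (insert f (B₁ \ {e})) := by
    rw [(hB₁.indep.diff {e}).insert_indep_iff_of_notMem (fun h => hfB₁ h.1)]
    exact ⟨hB₂.subset_ground hfB₂, hfcl⟩
  have hbase1 : M.IsBase (insert f (B₁ \ {e})) := hB₁.exchange_isBase_of_indep hfB₁ hind1
  -- `insert e (B₂ \ {f})` is a base
  have hind2 : M.Indep (insert e (B₂ \ {f})) := by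
    by_contra hdep
    have hB2d : M.Indep (B₂ \ {f}) := hB₂.indep.diff {f}
    have hecl : e ∈ M.closure (B₂ \ {f}) := by
      rw [hB2d.insert_indep_iff_of_notMem (fun h => heB₂ h.1)] at hdep
      simp only [mem_diff, not_and, not_not] at hdep
      exact hdep heE
    have hex : f ∈ M.closure (insert e (J \ {f})) \ M.closure (J \ {f}) := by
      apply Matroid.closure_exchange
      refine ⟨?_, hminJ f hfJ⟩
      rwa [Set.insert_diff_singleton, Set.insert_eq_of_mem hfJ]
    have hfcl2 : f ∈ M.closure (insert e (B₂ \ {f})) :=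
      M.closure_subset_closure (insert_subset_insert (diff_subset_diff_left hJB₂)) hex.1
    rw [Matroid.closure_insert_eq_of_mem_closure hecl] at hfcl2
    exact hB₂.indep.notMem_closure_diff_of_mem hfB₂ hfcl2
  have hbase2 : M.IsBase (insert e (B₂ \ {f})) := hB₂.exchange_isBase_of_indep heB₂ hind2
  -- weight comparisons
  have hs1 : (∑ᶠ i ∈ B₁, w i) = w e + ∑ᶠ i ∈ B₁ \ {e}, w i := wsplit B₁ e heB₁
  have hs2 : (∑ᶠ i ∈ B₂, w i) = w f + ∑ᶠ i ∈ B₂ \ {f}, w i := wsplit B₂ f hfB₂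
  have hs1' : (∑ᶠ i ∈ insert f (B₁ \ {e}), w i) = w f + ∑ᶠ i ∈ B₁ \ {e}, w i :=
    finsum_mem_insert _ (fun h => hfB₁ h.1) (Set.toFinite _)
  have hs2' : (∑ᶠ i ∈ insert e (B₂ \ {f}), w i) = w e + ∑ᶠ i ∈ B₂ \ {f}, w i :=
    finsum_mem_insert _ (fun h => heB₂ h.1) (Set.toFinite _)
  have hwfe : w f ≤ w e := by
    have := hw₂ _ hbase2
    rw [hs2, hs2'] at this
    linarith
  refine ⟨f, ⟨hfB₂, hfB₁⟩, hbase1, fun B' hB' => ?_⟩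
  have := hw₁ B' hB'
  rw [hs1'] at *
  linarith
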